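/- arXiv:2204.08847 — 3 statements merged into one kernel-verified Lean document; each statement's English description precedes it below -/
import Mathlib

section
/- Let H be a d-dimensional RKHS on a set X with kernel k, and let x_1,…,x_d ∈ X be points such that k(x_1,·),…,k(x_d,·) are linearly independent, with kernel matrix K = (k(x_i,x_j)) having minimal eigenvalue λ_d > 0. Then for every h ∈ H, (λ_d/d)^{1/2}·‖h‖ ≤ ‖h‖_∞. -/
open scoped RealInnerProductSpace ENNReal

/-- In a `d`-dimensional RKHS, if the features at points `x_1, …, x_d` are linearly
    independent and `lam` is the minimal eigenvalue of the Gram matrix, then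
    `√(lam/d)·‖h‖ ≤ ‖h‖_∞` for every `h`. -/
theorem rkhs_sup_norm_lower_bound {X H : Type*}
    [NormedAddCommGroup H] [InnerProductSpace ℝ H]
    (d : ℕ) (hd : 0 < d) [FiniteDimensional ℝ H]
    (hdim : Module.finrank ℝ H = d)
    (Φ : X → H) (hspan : Submodule.span ℝ (Set.range Φ) = ⊤)
    (x : Fin d → X) (hli : LinearIndependent ℝ (fun i => Φ (x i)))
    (K : Matrix (Fin d) (Fin d) ℝ) (hK : ∀ i j, K i j = ⟪Φ (x i), Φ (x j)⟫)
    (lam : ℝ)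
    (hlam_lb : ∀ v : Fin d → ℝ, lam * (∑ i, v i ^ 2) ≤ ∑ i, ∑ j, v i * K i j * v j)
    (hlam_eig : ∃ v : Fin d → ℝ, v ≠ 0 ∧ K.mulVec v = lam • v)
    (h : H) :
    ENNReal.ofReal (Real.sqrt (lam / d) * ‖h‖) ≤ ⨆ x', (‖⟪Φ x', h⟫‖₊ : ℝ≥0∞) := by
  classical
  -- lam > 0
  have hlam_pos : 0 < lam := by
    obtain ⟨v, hv0, hveig⟩ := hlam_eig
    set u := ∑ i, v i • Φ (x i) with hu
    have hu0 : u ≠ 0 := by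
      intro h0
      exact hv0 (funext fun i => (Fintype.linearIndependent_iff.mp hli v h0) i)
    have hinner : ⟪u, u⟫ = lam * ∑ i, v i ^ 2 := by
      rw [hu, sum_inner]
      have : ∀ i, ⟪v i • Φ (x i), ∑ j, v j • Φ (x j)⟫ = v i * (lam * v i) := by
        intro i
        rw [inner_sum]
        have : ∀ j, ⟪v i • Φ (x i), v j • Φ (x j)⟫ = v i * (K i j * v j) := by
          intro j
          rw [real_inner_smul_left, real_inner_smul_right, hK i j]; ring
        rw [Finset.sum_congr rfl fun j _ => this j, ← Finset.mul_sum]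
        congr 1
        have := congrFun hveig i
        simp only [Matrix.mulVec, dotProduct, Pi.smul_apply, smul_eq_mul] at this
        rw [← this]
      rw [Finset.sum_congr rfl fun i _ => this i]
      rw [Finset.sum_congr rfl (fun i _ => by ring : ∀ i ∈ Finset.univ, v i * (lam * v i) = lam * v i ^ 2)]
      rw [← Finset.mul_sum]
    have hpos : 0 < ⟪u, u⟫ := by
      rw [real_inner_self_eq_norm_sq]
      exact pow_pos (norm_pos_iff.mpr hu0) 2
    have hv2 : 0 < ∑ i, v i ^ 2 := by
      have : ∃ i, v i ≠ 0 := by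
        by_contra hc; push_neg at hc; exact hv0 (funext hc)
      obtain ⟨i, hi⟩ := this
      have : 0 < v i ^ 2 := by positivity
      exact lt_of_lt_of_le this (Finset.single_le_sum (fun j _ => sq_nonneg (v j)) (Finset.mem_univ i))
    nlinarith [hinner ▸ hpos]
  rcases eq_or_ne h 0 with rfl | hh0
  · simp
  -- basis
  haveI : Nonempty (Fin d) := ⟨⟨0, hd⟩⟩
  have hcard : Fintype.card (Fin d) = Module.finrank ℝ H := by simp [hdim]
  set b : Module.Basis (Fin d) ℝ H := basisOfLinearIndependentOfCardEqFinrank hli hcard with hb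
  have hbcoe : ∀ i, b i = Φ (x i) := fun i => by
    rw [hb, coe_basisOfLinearIndependentOfCardEqFinrank]
  set c : Fin d → ℝ := fun i => b.repr h i with hc
  have hrepr : ∑ i, c i • Φ (x i) = h := by
    have := b.sum_repr h
    simpa [hbcoe] using this
  set w : Fin d → ℝ := fun i => ∑ j, K i j * c j with hwdef
  have hw : ∀ i, ⟪Φ (x i), h⟫ = w i := by
    intro i
    rw [← hrepr, inner_sum, hwdef]
    exact Finset.sum_congr rfl fun j _ => by
      rw [real_inner_smul_right, hK i j]; ring
  have hnorm : ‖h‖ ^ 2 = ∑ i, c i * w i := by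
    rw [← real_inner_self_eq_norm_sq]
    conv_lhs => rw [← hrepr, sum_inner]
    refine Finset.sum_congr rfl fun i _ => ?_
    rw [real_inner_smul_left]
    congr 1
    rw [hrepr]
    exact hw i
  have hlb : lam * ∑ i, c i ^ 2 ≤ ‖h‖ ^ 2 := by
    refine le_trans (hlam_lb c) ?_
    rw [hnorm]
    refine le_of_eq (Finset.sum_congr rfl fun i _ => ?_)
    rw [hwdef, Finset.mul_sum]
    exact Finset.sum_congr rfl fun j _ => by ring
  -- max
  obtain ⟨i0, -, hi0⟩ := Finset.exists_max_image Finset.univ (fun i => |w i|)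
    ⟨⟨0, hd⟩, Finset.mem_univ _⟩
  set M := |w i0| with hM
  have hMnn : 0 ≤ M := abs_nonneg _
  have hW : ∑ i, w i ^ 2 ≤ d * M ^ 2 := by
    calc ∑ i, w i ^ 2 ≤ ∑ _i : Fin d, M ^ 2 := by
          refine Finset.sum_le_sum fun i _ => ?_
          rw [← sq_abs]
          exact pow_le_pow_left₀ (abs_nonneg _) (hi0 i (Finset.mem_univ i)) 2
      _ = d * M ^ 2 := by simp [Finset.sum_const, nsmul_eq_mul]
  have hCS : (∑ i, c i * w i) ^ 2 ≤ (∑ i, c i ^ 2) * ∑ i, w i ^ 2 :=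
    Finset.sum_mul_sq_le_sq_mul_sq Finset.univ c w
  -- combine
  have hhpos : 0 < ‖h‖ := norm_pos_iff.mpr hh0
  have hkey : lam / d * ‖h‖ ^ 2 ≤ M ^ 2 := by
    have hCnn : 0 ≤ ∑ i, c i ^ 2 := Finset.sum_nonneg fun i _ => sq_nonneg _
    have h1 : (‖h‖ ^ 2) ^ 2 ≤ (∑ i, c i ^ 2) * (d * M ^ 2) := by
      calc (‖h‖ ^ 2) ^ 2 = (∑ i, c i * w i) ^ 2 := by rw [hnorm]
        _ ≤ (∑ i, c i ^ 2) * ∑ i, w i ^ 2 := hCS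
        _ ≤ (∑ i, c i ^ 2) * (d * M ^ 2) := mul_le_mul_of_nonneg_left hW hCnn
    have h2 : lam * (‖h‖ ^ 2) ^ 2 ≤ ‖h‖ ^ 2 * (d * M ^ 2) := by
      calc lam * (‖h‖ ^ 2) ^ 2 ≤ lam * ((∑ i, c i ^ 2) * (d * M ^ 2)) :=
            mul_le_mul_of_nonneg_left h1 hlam_pos.le
        _ = (lam * ∑ i, c i ^ 2) * (d * M ^ 2) := by ring
        _ ≤ ‖h‖ ^ 2 * (d * M ^ 2) := mul_le_mul_of_nonneg_right hlb (by positivity)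
    have hd' : (0:ℝ) < d := Nat.cast_pos.mpr hd
    have h3 : lam * ‖h‖ ^ 2 ≤ ↑d * M ^ 2 :=
      le_of_mul_le_mul_right (by nlinarith [h2]) (pow_pos hhpos 2)
    rw [div_mul_eq_mul_div, div_le_iff₀ hd']
    linarith
  have hfinal : Real.sqrt (lam / d) * ‖h‖ ≤ M := by
    have : Real.sqrt (lam / d) * ‖h‖ = Real.sqrt (lam / d * ‖h‖ ^ 2) := by
      rw [Real.sqrt_mul (by positivity), Real.sqrt_sq hhpos.le]
    rw [this]
    calc Real.sqrt (lam / d * ‖h‖ ^ 2) ≤ Real.sqrt (M ^ 2) := Real.sqrt_le_sqrt hkey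
      _ = M := Real.sqrt_sq hMnn
  calc ENNReal.ofReal (Real.sqrt (lam / d) * ‖h‖) ≤ ENNReal.ofReal M :=
        ENNReal.ofReal_le_ofReal hfinal
    _ = (‖⟪Φ (x i0), h⟫‖₊ : ℝ≥0∞) := by
        rw [hw i0]; exact (Real.enorm_eq_ofReal_abs (w i0)).symm
    _ ≤ ⨆ x', (‖⟪Φ x', h⟫‖₊ : ℝ≥0∞) := le_iSup (fun x' => (‖⟪Φ x', h⟫‖₊ : ℝ≥0∞)) (x i0)
end

section
/- Let X be compact, k a continuous kernel on X with infinite-dimensional RKHS H and C the closed convex hull of {k(x,·) : x ∈ X}. For every ε > 0 and every orthonormal sequence (e_n) in H, the set {n : sup_x e_n(x) − inf_x e_n(x) > ε} is finite. -/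
open scoped RealInnerProductSpace
open Filter

/-- For a fixed vector `v`, the inner products with an orthonormal sequence tend to zero. -/
lemma inner_orthonormal_tendsto_zero {H : Type*} [NormedAddCommGroup H]
    [InnerProductSpace ℝ H] (e : ℕ → H) (he : Orthonormal ℝ e) (v : H) :
    Tendsto (fun n => ⟪v, e n⟫) atTop (nhds 0) := by
  have hsum : Summable fun n => ‖⟪e n, v⟫‖ ^ 2 := he.inner_products_summable v
  have h0 : Tendsto (fun n => ‖⟪e n, v⟫‖ ^ 2) atTop (nhds 0) := hsum.tendsto_atTop_zero
  have habs : Tendsto (fun n => |⟪v, e n⟫|) atTop (nhds 0) := by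
    have := (Real.continuous_sqrt.tendsto 0).comp h0
    simp only [Function.comp_def, Real.sqrt_zero] at this
    simpa [Real.sqrt_sq_eq_abs, Real.norm_eq_abs, abs_abs, real_inner_comm v] using this
  exact tendsto_zero_iff_abs_tendsto_zero _ |>.2 habs

/-- For a continuous kernel on a compact space with infinite-dimensional RKHS, for
    every `ε > 0` and every orthonormal sequence `(e_n)`, only finitely many `e_n`
    have directional diameter `sup_x e_n(x) − inf_x e_n(x)` exceeding `ε`. -/
theorem finitely_many_large_diameters {X H : Type*}
    [TopologicalSpace X] [CompactSpace X]
    [NormedAddCommGroup H] [InnerProductSpace ℝ H] [CompleteSpace H]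
    (hinf : ¬ FiniteDimensional ℝ H)
    (Φ : X → H) (hΦ : Continuous Φ)
    (hspan : Dense (Submodule.span ℝ (Set.range Φ) : Set H))
    (e : ℕ → H) (he : Orthonormal ℝ e)
    (ε : ℝ) (hε : 0 < ε) :
    {n : ℕ | ε < sSup (Set.range fun x => ⟪Φ x, e n⟫)
        - sInf (Set.range fun x => ⟪Φ x, e n⟫)}.Finite := by
  -- X is nonempty, else H would be trivial hence finite-dimensional
  have hX : Nonempty X := by
    by_contra hempty
    rw [not_nonempty_iff] at hempty
    have hr : Set.range Φ = ∅ := Set.range_eq_empty Φ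
    rw [hr, Submodule.span_empty] at hspan
    have : (closure ((⊥ : Submodule ℝ H) : Set H)) = Set.univ := hspan.closure_eq
    have hcl : (closure ((⊥ : Submodule ℝ H) : Set H)) = {0} := by
      simp [Submodule.bot_coe]
    rw [hcl] at this
    have : Subsingleton H := by
      constructor
      intro a b
      have ha : a ∈ ({0} : Set H) := this ▸ Set.mem_univ a
      have hb : b ∈ ({0} : Set H) := this ▸ Set.mem_univ b
      simp at ha hb; rw [ha, hb]
    exact hinf (Module.Finite.of_finite)
  -- each e n is a unit vector
  have hen : ∀ n, ‖e n‖ = 1 := fun n => he.1 n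
  have hinner_bound : ∀ (v : H) (n : ℕ), |⟪v, e n⟫| ≤ ‖v‖ := by
    intro v n
    calc |⟪v, e n⟫| ≤ ‖v‖ * ‖e n‖ := abs_real_inner_le_norm v (e n)
    _ = ‖v‖ := by rw [hen n, mul_one]
  -- the range of each coordinate function is nonempty, compact, hence bounded
  have hcomp : ∀ n, IsCompact (Set.range fun x => ⟪Φ x, e n⟫) :=
    fun n => isCompact_range (hΦ.inner continuous_const)
  by_contra hfin
  replace hfin : Set.Infinite _ := hfin
  -- for each n in the bad set, pick points realizing a gap > ε
  have hsel : ∀ n ∈ {n : ℕ | ε < sSup (Set.range fun x => ⟪Φ x, e n⟫)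
      - sInf (Set.range fun x => ⟪Φ x, e n⟫)},
      ∃ x y : X, ε < ⟪Φ x, e n⟫ - ⟪Φ y, e n⟫ := by
    intro n hn
    set R := Set.range fun x => ⟪Φ x, e n⟫ with hR
    have hne : R.Nonempty := Set.range_nonempty _
    have h1 : sInf R + ε < sSup R := by
      have := hn; simp only [Set.mem_setOf_eq] at this; linarith
    obtain ⟨a, ha, hlt⟩ := exists_lt_of_lt_csSup hne h1
    have h2 : sInf R < a - ε := by linarith
    obtain ⟨b, hb, hlt'⟩ := exists_lt_of_csInf_lt hne h2
    obtain ⟨x, hx⟩ := ha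
    obtain ⟨y, hy⟩ := hb
    have hx' : (⟪Φ x, e n⟫ : ℝ) = a := hx
    have hy' : (⟪Φ y, e n⟫ : ℝ) = b := hy
    exact ⟨x, y, by rw [hx', hy']; linarith⟩
  choose! x y hxy using hsel
  -- an injective enumeration of the bad set
  let f : ℕ → ℕ := fun k => (hfin.natEmbedding _ k : ℕ)
  have hf_inj : Function.Injective f := fun a b hab => by
    exact (hfin.natEmbedding _).injective (Subtype.ext hab)
  have hf_mem : ∀ k, f k ∈ {n : ℕ | ε < sSup (Set.range fun x => ⟪Φ x, e n⟫)
      - sInf (Set.range fun x => ⟪Φ x, e n⟫)} := fun k => (hfin.natEmbedding _ k).2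
  -- points u k, w k in the compact set range Φ
  have hK : IsCompact (Set.range Φ) := isCompact_range hΦ
  set u : ℕ → H := fun k => Φ (x (f k)) with hu
  set w : ℕ → H := fun k => Φ (y (f k)) with hw
  obtain ⟨a, -, φ, hφ, hua⟩ := hK.tendsto_subseq (x := u) (fun k => Set.mem_range_self _)
  obtain ⟨b, -, ψ, hψ, hwb⟩ := hK.tendsto_subseq (x := w ∘ φ) (fun k => Set.mem_range_self _)
  set m : ℕ → ℕ := fun j => φ (ψ j) with hm
  have hm_mono : StrictMono m := hφ.comp hψ
  have hua' : Tendsto (fun j => u (m j)) atTop (nhds a) :=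
    hua.comp hψ.tendsto_atTop
  have hwb' : Tendsto (fun j => w (m j)) atTop (nhds b) := hwb
  -- f ∘ m tends to infinity
  have hfm : Tendsto (fun j => f (m j)) atTop atTop := by
    have : Function.Injective (fun j => f (m j)) := hf_inj.comp hm_mono.injective
    rw [← Nat.cofinite_eq_atTop]
    exact this.tendsto_cofinite
  -- the middle term tends to 0 by Bessel
  have hmid : Tendsto (fun j => ⟪a - b, e (f (m j))⟫) atTop (nhds 0) :=
    (inner_orthonormal_tendsto_zero e he (a - b)).comp hfm
  -- the full sequence of gaps tends to 0
  have hG : Tendsto (fun j => ⟪u (m j) - w (m j), e (f (m j))⟫) atTop (nhds 0) := by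
    have hsq : Tendsto (fun j => ‖u (m j) - a‖ + |⟪a - b, e (f (m j))⟫| + ‖b - w (m j)‖)
        atTop (nhds 0) := by
      have h1 : Tendsto (fun j => ‖u (m j) - a‖) atTop (nhds 0) := by
        rw [← tendsto_sub_nhds_zero_iff] at hua'
        simpa using hua'.norm
      have h2 : Tendsto (fun j => |⟪a - b, e (f (m j))⟫|) atTop (nhds 0) := by
        simpa using hmid.abs
      have h3 : Tendsto (fun j => ‖b - w (m j)‖) atTop (nhds 0) := by
        have := hwb'
        rw [← tendsto_sub_nhds_zero_iff] at this
        have := this.norm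
        simpa [norm_sub_rev] using this
      simpa using (h1.add h2).add h3
    have habs : Tendsto (fun j => |⟪u (m j) - w (m j), e (f (m j))⟫|) atTop (nhds 0) := by
      apply squeeze_zero (fun j => abs_nonneg _) _ hsq
      intro j
      have key : ⟪u (m j) - w (m j), e (f (m j))⟫
          = ⟪u (m j) - a, e (f (m j))⟫ + ⟪a - b, e (f (m j))⟫ + ⟪b - w (m j), e (f (m j))⟫ := by
        rw [← inner_add_left, ← inner_add_left]
        congr 1
        abel
      rw [key]
      calc |⟪u (m j) - a, e (f (m j))⟫ + ⟪a - b, e (f (m j))⟫ + ⟪b - w (m j), e (f (m j))⟫|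
          ≤ |⟪u (m j) - a, e (f (m j))⟫| + |⟪a - b, e (f (m j))⟫| + |⟪b - w (m j), e (f (m j))⟫| :=
            (abs_add_le _ _).trans (add_le_add_left (abs_add_le _ _) _)
        _ ≤ ‖u (m j) - a‖ + |⟪a - b, e (f (m j))⟫| + ‖b - w (m j)‖ :=
            add_le_add (add_le_add (hinner_bound _ _) le_rfl) (hinner_bound _ _)
    exact tendsto_zero_iff_abs_tendsto_zero _ |>.2 habs
  -- but each gap exceeds ε > 0, contradiction
  have hεle : ε ≤ 0 := by
    apply le_of_tendsto_of_tendsto' tendsto_const_nhds hG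
    intro j
    have := hxy (f (m j)) (hf_mem (m j))
    rw [inner_sub_left]
    exact this.le
  linarith
end

section
/- Let X = [0,1]^d, H an RKHS on X such that every h ∈ H satisfies |h(x) − h(x')| ≤ L‖h‖·‖x − x'‖, and P a probability measure on X with density bounded below by c > 0. Let m = ∫ k(x,·) dP. If h ∈ H with ‖h‖ ≤ 1 and there exists x with ⟨h, k(x,·) − m⟩ ≥ γ > 0 and γ/L ≤ 1, then max_{y ∈ X} ⟨−h, k(y,·) − m⟩ ≥ c·γ^{d+1}·β_d / ((d+1)·(2L)^d), where β_d is the Lebesgue volume of the unit ball in ℝ^d. -/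
open MeasureTheory
open scoped RealInnerProductSpace ENNReal

namespace OppositeMass

variable {d : ℕ}

lemma norm_le_of_abs_coord_le {x y : EuclideanSpace ℝ (Fin d)}
    (h : ∀ i, |x i| ≤ |y i|) : ‖x‖ ≤ ‖y‖ := by
  rw [EuclideanSpace.norm_eq, EuclideanSpace.norm_eq]
  apply Real.sqrt_le_sqrt
  apply Finset.sum_le_sum
  intro i _
  simp only [Real.norm_eq_abs]
  exact pow_le_pow_left₀ (abs_nonneg _) (h i) 2

lemma abs_coord_le_norm (x : EuclideanSpace ℝ (Fin d)) (i : Fin d) : |x i| ≤ ‖x‖ := by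
  rw [EuclideanSpace.norm_eq]
  have : |x i| = Real.sqrt (x i ^ 2) := by rw [Real.sqrt_sq_eq_abs]
  rw [this]
  apply Real.sqrt_le_sqrt
  simp only [Real.norm_eq_abs, sq_abs]
  exact Finset.single_le_sum (fun j _ => sq_nonneg (x j)) (Finset.mem_univ i)

/-- coordinatewise affine sign-flip maps preserve volume on Euclidean space -/
lemma mp_coord (a : Fin d → ℝ) (e : Fin d → Bool) :
    MeasurePreserving
      (fun (u : EuclideanSpace ℝ (Fin d)) => WithLp.toLp 2 (fun (i : Fin d) => a i + (if e i then u i else - u i)))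
      (volume : Measure (EuclideanSpace ℝ (Fin d)))
      (volume : Measure (EuclideanSpace ℝ (Fin d))) := by
  have h1 : ∀ i : Fin d, MeasurePreserving
      (fun t : ℝ => a i + (if e i then t else -t)) volume volume := by
    intro i
    cases he : e i
    · simpa [Function.comp_def] using (measurePreserving_add_left (volume : Measure ℝ) (a i)).comp
        (Measure.measurePreserving_neg (volume : Measure ℝ))
    · simpa using measurePreserving_add_left (volume : Measure ℝ) (a i)
  have h2 := MeasureTheory.volume_preserving_pi h1
  have e1 := EuclideanSpace.volume_preserving_symm_measurableEquiv_toLp (Fin d)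
  exact (PiLp.volume_preserving_toLp (Fin d)).comp (h2.comp e1)


lemma measurable_eval (i : Fin d) : Measurable (fun u : EuclideanSpace ℝ (Fin d) => u i) :=
  (EuclideanSpace.proj (𝕜 := ℝ) i).continuous.measurable

/-- the folded map `G` pushes the restricted volume on the unit cube to a measure `≤ volume`. -/
lemma fold_measure (x₀ : EuclideanSpace ℝ (Fin d)) (hx₀ : ∀ i, x₀ i ∈ Set.Icc (0:ℝ) 1)
    (G : EuclideanSpace ℝ (Fin d) → EuclideanSpace ℝ (Fin d))
    (hG : ∀ u i, G u i = if x₀ i + u i ≤ 1 then x₀ i + u i else 1 - u i)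
    (hGmeas : Measurable G) :
    Measure.map G (volume.restrict {u : EuclideanSpace ℝ (Fin d) | ∀ i, u i ∈ Set.Icc (0:ℝ) 1})
      ≤ volume := by
  classical
  set Q : Set (EuclideanSpace ℝ (Fin d)) := {u | ∀ i, u i ∈ Set.Icc (0:ℝ) 1} with hQdef
  rw [Measure.le_iff]
  intro s hs
  rw [Measure.map_apply hGmeas hs, Measure.restrict_apply (hGmeas hs)]
  set J : (Fin d → Bool) → Fin d → Set ℝ :=
    fun σ i => if σ i then Set.Icc (x₀ i) 1 else Set.Ico 0 (x₀ i) with hJdef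
  set I : (Fin d → Bool) → Set (EuclideanSpace ℝ (Fin d)) :=
    fun σ => {y | ∀ i, y i ∈ J σ i} with hIdef
  set P : (Fin d → Bool) → Set (EuclideanSpace ℝ (Fin d)) :=
    fun σ => {u | ∀ i, if σ i then x₀ i + u i ≤ 1 else 1 < x₀ i + u i} with hPdef
  set Gσ : (Fin d → Bool) → EuclideanSpace ℝ (Fin d) → EuclideanSpace ℝ (Fin d) :=
    fun σ u => WithLp.toLp 2 (fun i => (if σ i then x₀ i else 1) + (if σ i then u i else - u i)) with hGσdef
  have hGσ : ∀ σ, MeasurePreserving (Gσ σ)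
      (volume : Measure (EuclideanSpace ℝ (Fin d)))
      (volume : Measure (EuclideanSpace ℝ (Fin d))) := by
    intro σ
    have := mp_coord (d := d) (fun i => if σ i then x₀ i else 1) σ
    exact this
  have hImeas : ∀ σ, MeasurableSet (I σ) := by
    intro σ
    have : I σ = ⋂ i, (fun y : EuclideanSpace ℝ (Fin d) => y i) ⁻¹' (J σ i) := by
      ext y; simp [hIdef, Set.mem_iInter]
    rw [this]
    refine MeasurableSet.iInter (fun i => ?_)
    refine (measurable_eval i) ?_
    by_cases hσ : σ i <;> simp [hJdef, hσ, measurableSet_Icc, measurableSet_Ico]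
  have hcover : G ⁻¹' s ∩ Q ⊆ ⋃ σ, (G ⁻¹' s ∩ Q ∩ P σ) := by
    intro u hu
    refine Set.mem_iUnion.2 ⟨fun i => decide (x₀ i + u i ≤ 1), hu, fun i => ?_⟩
    by_cases hcase : x₀ i + u i ≤ 1
    · simp [hPdef, hcase]
    · have : decide (x₀ i + u i ≤ 1) = false := decide_eq_false hcase
      simp only [hPdef, Set.mem_setOf_eq, this, Bool.false_eq_true, if_false]
      exact lt_of_not_ge hcase
  have hsub : ∀ σ, G ⁻¹' s ∩ Q ∩ P σ ⊆ (Gσ σ) ⁻¹' (s ∩ I σ) := by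
    rintro σ u ⟨⟨hus, huQ⟩, huP⟩
    have hGu : Gσ σ u = G u := by
      ext i
      have hP := huP i
      rw [hG]
      cases hσ : σ i
      · rw [hσ] at hP; simp only [Bool.false_eq_true, if_false] at hP
        simp only [hGσdef, hσ, Bool.false_eq_true, if_false]
        rw [if_neg (by linarith)]
        ring
      · rw [hσ] at hP; simp only [if_true] at hP
        simp only [hGσdef, hσ, if_true]
        rw [if_pos hP]
    refine ⟨?_, fun i => ?_⟩
    · show Gσ σ u ∈ s
      rw [hGu]; exact hus
    · have hQ1 := (huQ i).1
      have hQ2 := (huQ i).2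
      have hP := huP i
      have h1 := (hx₀ i).1
      have h2 := (hx₀ i).2
      cases hσ : σ i
      · rw [hσ] at hP; simp only [Bool.false_eq_true, if_false] at hP
        simp only [hJdef, hGσdef, hσ, Bool.false_eq_true, if_false, Set.mem_Ico]
        constructor
        · linarith
        · linarith
      · rw [hσ] at hP; simp only [if_true] at hP
        simp only [hJdef, hGσdef, hσ, if_true, Set.mem_Icc]
        constructor
        · linarith
        · linarith
  have hIdisj : Pairwise (Function.onFun Disjoint (fun σ => s ∩ I σ)) := by
    intro σ σ' hne
    obtain ⟨i, hi⟩ := Function.ne_iff.mp hne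
    refine Set.disjoint_left.2 ?_
    rintro y ⟨-, hy⟩ ⟨-, hy'⟩
    have h1 := hy i
    have h2 := hy' i
    simp only [hJdef] at h1 h2
    cases hσ : σ i <;> cases hσ' : σ' i
    · exact hi (hσ.trans hσ'.symm)
    · rw [hσ] at h1; rw [hσ'] at h2
      simp only [if_false, if_true, Set.mem_Ico, Set.mem_Icc] at h1 h2
      linarith [h1.2, h2.1]
    · rw [hσ] at h1; rw [hσ'] at h2
      simp only [if_false, if_true, Set.mem_Ico, Set.mem_Icc] at h1 h2
      linarith [h1.1, h2.2]
    · exact hi (hσ.trans hσ'.symm)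
  calc volume (G ⁻¹' s ∩ Q)
      ≤ volume (⋃ σ, (G ⁻¹' s ∩ Q ∩ P σ)) := measure_mono hcover
    _ ≤ ∑' σ, volume (G ⁻¹' s ∩ Q ∩ P σ) := measure_iUnion_le _
    _ = ∑ σ, volume (G ⁻¹' s ∩ Q ∩ P σ) := tsum_fintype _
    _ ≤ ∑ σ, volume ((Gσ σ) ⁻¹' (s ∩ I σ)) :=
        Finset.sum_le_sum (fun σ _ => measure_mono (hsub σ))
    _ = ∑ σ, volume (s ∩ I σ) := by
        refine Finset.sum_congr rfl (fun σ _ => ?_)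
        exact (hGσ σ).measure_preimage ((hs.inter (hImeas σ)).nullMeasurableSet)
    _ = volume (⋃ σ, s ∩ I σ) := by
        rw [measure_iUnion hIdisj (fun σ => hs.inter (hImeas σ))]
        exact (tsum_fintype _).symm
    _ ≤ volume s := by
        refine measure_mono (Set.iUnion_subset fun σ => Set.inter_subset_left)


lemma vol_hyperplane (hd : 0 < d) (i : Fin d) :
    volume {u : EuclideanSpace ℝ (Fin d) | u i = 0} = 0 := by
  set S : Submodule ℝ (EuclideanSpace ℝ (Fin d)) := LinearMap.ker (EuclideanSpace.projₗ (𝕜 := ℝ) i)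
  have hS : {u : EuclideanSpace ℝ (Fin d) | u i = 0} = (S : Set (EuclideanSpace ℝ (Fin d))) := by
    ext u
    simp [S, LinearMap.mem_ker]
  rw [hS]
  refine Measure.addHaar_submodule volume S (fun htop => ?_)
  have hmem := Submodule.eq_top_iff'.mp htop (EuclideanSpace.single i 1)
  rw [LinearMap.mem_ker] at hmem
  simp [EuclideanSpace.projₗ] at hmem

/-- symmetrization: the integral of a "radial-type" function is at most `2^d`
times its integral over the nonnegative orthant. -/
lemma orthant_lintegral (hd : 0 < d) (ψ : EuclideanSpace ℝ (Fin d) → ℝ≥0∞)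
    (hψ : Measurable ψ)
    (hsym : ∀ u v : EuclideanSpace ℝ (Fin d), (∀ i, v i = u i ∨ v i = - u i) → ψ v = ψ u) :
    ∫⁻ u, ψ u ≤ 2 ^ d * ∫⁻ u, Set.indicator {v : EuclideanSpace ℝ (Fin d) | ∀ i, 0 ≤ v i} ψ u := by
  classical
  set Opos : Set (EuclideanSpace ℝ (Fin d)) := {v | ∀ i, 0 ≤ v i}
  set N : Set (EuclideanSpace ℝ (Fin d)) := ⋃ i, {u | u i = 0} with hNdef
  have hN : volume N = 0 := measure_iUnion_null (fun i => vol_hyperplane hd i)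
  set O : (Fin d → Bool) → Set (EuclideanSpace ℝ (Fin d)) :=
    fun σ => {u | ∀ i, if σ i then 0 < u i else u i < 0} with hOdef
  have hOmeas : ∀ σ, MeasurableSet (O σ) := by
    intro σ
    have : O σ = ⋂ i, (fun u : EuclideanSpace ℝ (Fin d) => u i) ⁻¹'
        (if σ i then Set.Ioi (0:ℝ) else Set.Iio 0) := by
      ext u
      simp only [hOdef, Set.mem_setOf_eq, Set.mem_iInter, Set.mem_preimage]
      refine forall_congr' (fun i => ?_)
      cases σ i <;> simp
    rw [this]
    refine MeasurableSet.iInter (fun i => measurable_eval i ?_)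
    cases σ i <;> simp
  set R : (Fin d → Bool) → EuclideanSpace ℝ (Fin d) → EuclideanSpace ℝ (Fin d) :=
    fun σ u => WithLp.toLp 2 (fun i => if σ i then u i else - u i) with hRdef
  have hR : ∀ σ, MeasurePreserving (R σ)
      (volume : Measure (EuclideanSpace ℝ (Fin d)))
      (volume : Measure (EuclideanSpace ℝ (Fin d))) := by
    intro σ
    have h0 := mp_coord (d := d) (fun _ => 0) σ
    have : (fun (u : EuclideanSpace ℝ (Fin d)) => WithLp.toLp 2 (fun (i : Fin d) =>
        (fun _ : Fin d => (0:ℝ)) i + (if σ i then u i else - u i))) = R σ := by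
      funext u
      simp [hRdef]
    rwa [this] at h0
  have key : ∀ᵐ u : EuclideanSpace ℝ (Fin d), ψ u ≤ ∑ σ, (O σ).indicator ψ u := by
    have hNae : ∀ᵐ u : EuclideanSpace ℝ (Fin d), u ∉ N := by
      rw [ae_iff]
      simpa using hN
    filter_upwards [hNae] with u hu
    have hune : ∀ i, u i ≠ 0 := by
      intro i hi
      exact hu (Set.mem_iUnion.2 ⟨i, hi⟩)
    have humem : u ∈ O (fun i => decide (0 < u i)) := by
      intro i
      by_cases hpos : 0 < u i
      · simp [hpos]
      · have : decide (0 < u i) = false := decide_eq_false hpos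
        simp only [this, Bool.false_eq_true, if_false]
        exact lt_of_le_of_ne (le_of_not_gt hpos) (hune i)
    have : (O (fun i => decide (0 < u i))).indicator ψ u = ψ u := Set.indicator_of_mem humem ψ
    rw [← this]
    exact Finset.single_le_sum (f := fun σ => (O σ).indicator ψ u)
      (fun σ _ => zero_le) (Finset.mem_univ _)
  calc ∫⁻ u, ψ u ≤ ∫⁻ u, ∑ σ, (O σ).indicator ψ u := lintegral_mono_ae key
    _ = ∑ σ, ∫⁻ u, (O σ).indicator ψ u := by
        exact lintegral_finset_sum _ (fun σ _ => hψ.indicator (hOmeas σ))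
    _ = ∑ σ : Fin d → Bool, ∫⁻ u, (O (fun _ => true)).indicator ψ u := by
        refine Finset.sum_congr rfl (fun σ _ => ?_)
        rw [← (hR σ).lintegral_comp (hψ.indicator (hOmeas σ))]
        refine lintegral_congr (fun u => ?_)
        have hmem : R σ u ∈ O σ ↔ u ∈ O (fun _ => true) := by
          simp only [hOdef, Set.mem_setOf_eq, hRdef, if_true]
          refine forall_congr' (fun i => ?_)
          cases σ i <;> simp
        have hval : ψ (R σ u) = ψ u := by
          refine hsym u (R σ u) (fun i => ?_)
          simp only [hRdef]
          cases σ i <;> simp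
        by_cases hu : u ∈ O (fun _ => true)
        · rw [Set.indicator_of_mem (hmem.2 hu), Set.indicator_of_mem hu, hval]
        · rw [Set.indicator_of_notMem (fun hm => hu (hmem.1 hm)),
            Set.indicator_of_notMem hu]
    _ = 2 ^ d * ∫⁻ u, (O (fun _ => true)).indicator ψ u := by
        rw [Finset.sum_const, Finset.card_univ]
        simp [Fintype.card_fun]
    _ ≤ 2 ^ d * ∫⁻ u, Set.indicator Opos ψ u := by
        gcongr with u
        intro v hv i
        exact le_of_lt (by simpa using hv i)


lemma one_dim_integral (e : ℕ) (γ L : ℝ) (hγ : 0 < γ) (hL : 0 < L) :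
    ∫ y in Set.Ioi (0:ℝ), y ^ e • max (γ - L * y) 0 =
      γ ^ (e + 2) / (L ^ (e + 1) * ((e + 1) * (e + 2))) := by
  have hr : (0:ℝ) < γ / L := div_pos hγ hL
  have h1 : ∫ y in Set.Ioi (0:ℝ), y ^ e • max (γ - L * y) 0 =
      ∫ y in Set.Ioi (0:ℝ), (Set.Ioc 0 (γ/L)).indicator (fun y => γ * y ^ e - L * y ^ (e+1)) y := by
    refine setIntegral_congr_fun measurableSet_Ioi (fun y hy => ?_)
    have hy0 : 0 < y := hy
    by_cases hmem : y ∈ Set.Ioc (0:ℝ) (γ/L)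
    · rw [Set.indicator_of_mem hmem]
      have hle : L * y ≤ γ := by
        have := hmem.2
        calc L * y ≤ L * (γ/L) := by nlinarith
          _ = γ := by field_simp
      rw [smul_eq_mul, max_eq_left (by linarith)]
      ring
    · rw [Set.indicator_of_notMem hmem]
      have hgt : γ / L < y := by
        rcases lt_or_ge (γ/L) y with hlt | hle
        · exact hlt
        · exact absurd ⟨hy0, hle⟩ hmem
      have : γ - L * y < 0 := by
        have : γ < L * y := by
          have := (div_lt_iff₀ hL).mp hgt
          linarith
        linarith
      rw [smul_eq_mul, max_eq_right (by linarith), mul_zero]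
  rw [h1, setIntegral_indicator measurableSet_Ioc,
    Set.inter_eq_self_of_subset_right Set.Ioc_subset_Ioi_self,
    ← intervalIntegral.integral_of_le hr.le]
  have hi1 : IntervalIntegrable (fun y : ℝ => γ * y ^ e) volume 0 (γ/L) :=
    (intervalIntegral.intervalIntegrable_pow e).const_mul γ
  have hi2 : IntervalIntegrable (fun y : ℝ => L * y ^ (e+1)) volume 0 (γ/L) :=
    (intervalIntegral.intervalIntegrable_pow (e+1)).const_mul L
  rw [intervalIntegral.integral_sub hi1 hi2, intervalIntegral.integral_const_mul,
    intervalIntegral.integral_const_mul, integral_pow, integral_pow]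
  have hLne : (L:ℝ) ≠ 0 := ne_of_gt hL
  have he1 : ((e:ℝ) + 1) ≠ 0 := by positivity
  have he2 : ((e:ℝ) + 2) ≠ 0 := by positivity
  rw [div_pow, div_pow]
  push_cast
  field_simp
  ring


lemma radial_lintegral (hd : 0 < d) (γ L : ℝ) (hγ : 0 < γ) (hL : 0 < L) :
    ∫⁻ u : EuclideanSpace ℝ (Fin d), ENNReal.ofReal (γ - L * ‖u‖) =
      ENNReal.ofReal ((volume (Metric.ball (0 : EuclideanSpace ℝ (Fin d)) 1)).toReal *
        (γ ^ (d + 1) / ((d + 1) * L ^ d))) := by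
  obtain ⟨e, rfl⟩ : ∃ e, d = e + 1 := ⟨d - 1, (Nat.succ_pred_eq_of_pos hd).symm⟩
  haveI : Nonempty (Fin (e+1)) := ⟨0⟩
  haveI : Nontrivial (EuclideanSpace ℝ (Fin (e+1))) := by
    refine nontrivial_of_ne (EuclideanSpace.single 0 1) 0 (fun hsingle => ?_)
    have := congrArg (fun v : EuclideanSpace ℝ (Fin (e+1)) => v 0) hsingle
    simp [EuclideanSpace.single_apply] at this
  set fn : ℝ → ℝ := fun y => max (γ - L * y) 0 with hfn
  have hcont : Continuous (fun u : EuclideanSpace ℝ (Fin (e+1)) => fn ‖u‖) :=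
    (continuous_const.sub (continuous_const.mul continuous_norm)).max continuous_const
  have hsupp : HasCompactSupport (fun u : EuclideanSpace ℝ (Fin (e+1)) => fn ‖u‖) := by
    refine HasCompactSupport.intro (K := Metric.closedBall 0 (γ/L))
      (isCompact_closedBall _ _) (fun u hu => ?_)
    have hnorm : γ / L < ‖u‖ := by
      rw [Metric.mem_closedBall, dist_zero_right, not_le] at hu
      exact hu
    have : γ < L * ‖u‖ := by
      have := (div_lt_iff₀ hL).mp hnorm
      linarith
    simp only [hfn]
    rw [max_eq_right (by linarith)]
  have hint : Integrable (fun u : EuclideanSpace ℝ (Fin (e+1)) => fn ‖u‖) volume :=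
    hcont.integrable_of_hasCompactSupport hsupp
  have h0 : ∀ u : EuclideanSpace ℝ (Fin (e+1)),
      ENNReal.ofReal (γ - L * ‖u‖) = ENNReal.ofReal (fn ‖u‖) := by
    intro u
    simp only [hfn]
    rcases le_total (γ - L * ‖u‖) 0 with hc | hc
    · rw [max_eq_right hc, ENNReal.ofReal_of_nonpos hc, ENNReal.ofReal_zero]
    · rw [max_eq_left hc]
  rw [lintegral_congr h0,
    ← MeasureTheory.ofReal_integral_eq_lintegral_ofReal hint
      (Filter.Eventually.of_forall (fun u => le_max_right _ _))]
  congr 1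
  rw [MeasureTheory.integral_fun_norm_addHaar
    (volume : Measure (EuclideanSpace ℝ (Fin (e+1)))) fn]
  simp only [finrank_euclideanSpace_fin, Nat.add_sub_cancel]
  rw [one_dim_integral e γ L hγ hL]
  have hLne : (L:ℝ) ≠ 0 := ne_of_gt hL
  have he1 : ((e:ℝ) + 1) ≠ 0 := by positivity
  have he2 : ((e:ℝ) + 2) ≠ 0 := by positivity
  rw [nsmul_eq_mul, smul_eq_mul]
  push_cast
  field_simp
  simp only [measureReal_def]
  ring

end OppositeMass

/-- On `[0,1]^d`, with an RKHS whose unit ball is `L`-Lipschitz and a probability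
    measure with density bounded below by `c`: if `⟪h, k(x,·) − m⟫ ≥ γ` at some
    point, then in the opposite direction there is a point `y` with
    `⟪−h, k(y,·) − m⟫ ≥ c·γ^{d+1}·β_d / ((d+1)·(2L)^d)`. -/
theorem opposite_mass_bound {H : Type*}
    [NormedAddCommGroup H] [InnerProductSpace ℝ H] [CompleteSpace H]
    (d : ℕ) (hd : 0 < d)
    (cube : Set (EuclideanSpace ℝ (Fin d)))
    (hcube : cube = {x | ∀ i, x i ∈ Set.Icc (0 : ℝ) 1})
    (Φ : EuclideanSpace ℝ (Fin d) → H)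
    (L : ℝ) (hL : 0 < L)
    (hLip : ∀ (g : H), ∀ x ∈ cube, ∀ x' ∈ cube,
      |⟪Φ x, g⟫ - ⟪Φ x', g⟫| ≤ L * ‖g‖ * ‖x - x'‖)
    (μ : Measure (EuclideanSpace ℝ (Fin d))) [IsProbabilityMeasure μ]
    (p : EuclideanSpace ℝ (Fin d) → ℝ) (c : ℝ) (hc : 0 < c)
    (hμ : μ = (volume.restrict cube).withDensity (fun x => ENNReal.ofReal (p x)))
    (hp : ∀ x ∈ cube, c ≤ p x)
    (hΦint : Integrable Φ μ)
    (m : H) (hm : m = ∫ x, Φ x ∂μ)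
    (β : ℝ) (hβ : β = (volume (Metric.ball (0 : EuclideanSpace ℝ (Fin d)) 1)).toReal)
    (h : H) (hh : ‖h‖ ≤ 1)
    (γ : ℝ) (hγ : 0 < γ) (hγL : γ / L ≤ 1)
    (hx : ∃ x ∈ cube, γ ≤ ⟪h, Φ x - m⟫) :
    ∃ y ∈ cube,
      c * γ ^ (d + 1) * β / ((d + 1) * (2 * L) ^ d) ≤ ⟪-h, Φ y - m⟫ := by
  classical
  obtain ⟨x₀, hx₀cube, hx₀γ'⟩ := hx
  have hγLe : γ ≤ L := (div_le_one hL).mp hγL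
  set f : EuclideanSpace ℝ (Fin d) → ℝ := fun y => ⟪h, Φ y⟫ - ⟪h, m⟫ with hfdef
  have hfy : ∀ y, ⟪h, Φ y - m⟫ = f y := fun y => by rw [hfdef, inner_sub_right]
  have hfy' : ∀ y, ⟪-h, Φ y - m⟫ = - f y := fun y => by
    rw [inner_neg_left, hfy]
  have hx₀γ : γ ≤ f x₀ := by rw [← hfy]; exact hx₀γ'
  have hx₀ : ∀ i, x₀ i ∈ Set.Icc (0:ℝ) 1 := by
    have := hx₀cube; rw [hcube] at this; exact this
  -- Lipschitz property of f on the cube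
  have hLipf : ∀ y ∈ cube, ∀ y' ∈ cube, |f y - f y'| ≤ L * ‖y - y'‖ := by
    intro y hy y' hy'
    have h1 := hLip h y hy y' hy'
    have heq : f y - f y' = ⟪Φ y, h⟫ - ⟪Φ y', h⟫ := by
      rw [hfdef]
      simp only [real_inner_comm]
      ring
    rw [← heq] at h1
    calc |f y - f y'| ≤ L * ‖h‖ * ‖y - y'‖ := h1
      _ ≤ L * 1 * ‖y - y'‖ := by
          have h2 : L * ‖h‖ ≤ L * 1 := mul_le_mul_of_nonneg_left hh hL.le
          exact mul_le_mul_of_nonneg_right h2 (norm_nonneg _)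
      _ = L * ‖y - y'‖ := by ring
  -- cube is compact
  have hcube_meas : MeasurableSet cube := by
    have : cube = ⋂ i, (fun y : EuclideanSpace ℝ (Fin d) => y i) ⁻¹' Set.Icc (0:ℝ) 1 := by
      rw [hcube]; ext y; simp [Set.mem_iInter]
    rw [this]
    exact MeasurableSet.iInter (fun i => OppositeMass.measurable_eval i measurableSet_Icc)
  have hcube_closed : IsClosed cube := by
    have : cube = ⋂ i, (fun y : EuclideanSpace ℝ (Fin d) => y i) ⁻¹' Set.Icc (0:ℝ) 1 := by
      rw [hcube]; ext y; simp [Set.mem_iInter]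
    rw [this]
    exact isClosed_iInter (fun i =>
      IsClosed.preimage (EuclideanSpace.proj (𝕜 := ℝ) i).continuous isClosed_Icc)
  have hcube_bdd : Bornology.IsBounded cube := by
    refine (Metric.isBounded_closedBall (x := (0 : EuclideanSpace ℝ (Fin d)))
      (r := Real.sqrt d)).subset ?_
    intro y hy
    rw [hcube] at hy
    rw [Metric.mem_closedBall, dist_zero_right, EuclideanSpace.norm_eq]
    refine Real.sqrt_le_sqrt ?_
    calc (∑ i, ‖y i‖ ^ 2) ≤ ∑ _i : Fin d, (1:ℝ) := by
          refine Finset.sum_le_sum (fun i _ => ?_)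
          have h1 := (hy i).1
          have h2 := (hy i).2
          rw [Real.norm_eq_abs, sq_abs]
          nlinarith
      _ = d := by simp
  have hcube_cpt : IsCompact cube := Metric.isCompact_of_isClosed_isBounded hcube_closed hcube_bdd
  have hfcont : ContinuousOn f cube := by
    refine LipschitzOnWith.continuousOn (K := Real.toNNReal L) ?_
    refine LipschitzOnWith.of_dist_le_mul (fun y hy y' hy' => ?_)
    rw [Real.dist_eq, dist_eq_norm]
    calc |f y - f y'| ≤ L * ‖y - y'‖ := hLipf y hy y' hy'
      _ = (Real.toNNReal L : ℝ) * ‖y - y'‖ := by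
          rw [Real.coe_toNNReal L hL.le]
  obtain ⟨y₀, hy₀cube, hy₀min⟩ := hcube_cpt.exists_isMinOn ⟨x₀, hx₀cube⟩ hfcont
  set M : ℝ := - f y₀ with hMdef
  -- a.e. membership in cube
  have hae : ∀ᵐ y ∂μ, y ∈ cube := by
    rw [hμ]
    exact (withDensity_absolutelyContinuous _ _).ae_le (ae_restrict_mem hcube_meas)
  -- integral of f is zero
  have hfint : Integrable f μ := (hΦint.const_inner h).sub (integrable_const _)
  have hfμ : ∫ y, f y ∂μ = 0 := by
    rw [hfdef]
    rw [integral_sub (hΦint.const_inner h) (integrable_const _),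
      integral_inner hΦint h, integral_const]
    simp [hm]
  have hM0 : 0 ≤ M := by
    have hle : ∫ y, (fun _ => f y₀) y ∂μ ≤ ∫ y, f y ∂μ := by
      refine integral_mono_ae (integrable_const _) hfint ?_
      filter_upwards [hae] with y hy
      exact hy₀min hy
    rw [integral_const, hfμ] at hle
    simp at hle
    simpa [hMdef] using neg_nonneg.mpr hle
  -- the comparison function g
  set g : EuclideanSpace ℝ (Fin d) → ℝ := fun y => max (γ - L * ‖y - x₀‖) 0 with hgdef
  have hgcont : Continuous g :=
    (continuous_const.sub (continuous_const.mul (continuous_id.sub continuous_const).norm)).max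
      continuous_const
  have hgnonneg : ∀ y, 0 ≤ g y := fun y => le_max_right _ _
  have hgleγ : ∀ y, g y ≤ γ := by
    intro y
    refine max_le ?_ hγ.le
    have : 0 ≤ L * ‖y - x₀‖ := by positivity
    linarith
  have hgint : Integrable g μ := by
    refine (integrable_const γ).mono' hgcont.aestronglyMeasurable ?_
    filter_upwards with y
    rw [Real.norm_eq_abs, abs_of_nonneg (hgnonneg y)]
    exact hgleγ y
  -- g ≤ f + M a.e.
  have hgle : ∀ᵐ y ∂μ, g y ≤ f y + M := by
    filter_upwards [hae] with y hy
    have h1 : f x₀ - f y ≤ L * ‖x₀ - y‖ := le_trans (le_abs_self _) (hLipf x₀ hx₀cube y hy)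
    have h2 : ‖x₀ - y‖ = ‖y - x₀‖ := norm_sub_rev _ _
    have h3 : γ - L * ‖y - x₀‖ ≤ f y := by rw [← h2]; linarith
    have h4 : - M ≤ f y := by rw [hMdef, neg_neg]; exact hy₀min hy
    refine max_le (by linarith) (by linarith)
  have hstep : ∫ y, g y ∂μ ≤ M := by
    have h1 : ∫ y, g y ∂μ ≤ ∫ y, (f y + M) ∂μ :=
      integral_mono_ae hgint (hfint.add (integrable_const M)) hgle
    have h2 : ∫ y, (f y + M) ∂μ = M := by
      rw [integral_add hfint (integrable_const _), hfμ, integral_const,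
        probReal_univ, one_smul, zero_add]
    linarith
  -- the lintegral lower bound machinery
  set ψ : EuclideanSpace ℝ (Fin d) → ℝ≥0∞ := fun u => ENNReal.ofReal (γ - L * ‖u‖) with hψdef
  have hψmeas : Measurable ψ :=
    ENNReal.measurable_ofReal.comp
      (continuous_const.sub (continuous_const.mul continuous_norm)).measurable
  set F : EuclideanSpace ℝ (Fin d) → ℝ≥0∞ := fun y => ψ (y - x₀) with hFdef
  have hFmeas : Measurable F := hψmeas.comp (measurable_id.sub measurable_const)
  have hgF : ∀ y, ENNReal.ofReal (g y) = F y := by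
    intro y
    simp only [hgdef, hFdef, hψdef]
    rcases le_total (γ - L * ‖y - x₀‖) 0 with hcc | hcc
    · rw [max_eq_right hcc, ENNReal.ofReal_of_nonpos hcc, ENNReal.ofReal_zero]
    · rw [max_eq_left hcc]
  set Qset : Set (EuclideanSpace ℝ (Fin d)) := {u | ∀ i, u i ∈ Set.Icc (0:ℝ) 1} with hQdef
  have hQcube : Qset = cube := by rw [hcube]
  have hQmeas : MeasurableSet Qset := hQcube ▸ hcube_meas
  set G : EuclideanSpace ℝ (Fin d) → EuclideanSpace ℝ (Fin d) :=
    fun u => WithLp.toLp 2 (fun i => if x₀ i + u i ≤ 1 then x₀ i + u i else 1 - u i) with hGdef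
  have hGmeas : Measurable G := by
    refine (PiLp.volume_preserving_toLp (Fin d)).measurable.comp (measurable_pi_lambda _ (fun i => ?_))
    have hset : MeasurableSet {u : EuclideanSpace ℝ (Fin d) | x₀ i + u i ≤ 1} :=
      measurableSet_le (measurable_const.add (OppositeMass.measurable_eval i)) measurable_const
    exact Measurable.ite hset (measurable_const.add (OppositeMass.measurable_eval i))
      (measurable_const.sub (OppositeMass.measurable_eval i))
  have hmap := OppositeMass.fold_measure x₀ hx₀ G (fun u i => rfl) hGmeas
  have hGu : ∀ u ∈ Qset, G u ∈ cube ∧ ψ u ≤ F (G u) := by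
    intro u hu
    have hcoord : ∀ i, (0 ≤ G u i ∧ G u i ≤ 1) ∧ |G u i - x₀ i| ≤ |u i| := by
      intro i
      have h1 := (hu i).1
      have h2 := (hu i).2
      have hx1 := (hx₀ i).1
      have hx2 := (hx₀ i).2
      by_cases hcase : x₀ i + u i ≤ 1
      · have hval : G u i = x₀ i + u i := by simp only [hGdef]; rw [if_pos hcase]
        rw [hval]
        refine ⟨⟨by linarith, by linarith⟩, ?_⟩
        have hsimp : x₀ i + u i - x₀ i = u i := by ring
        rw [hsimp]
      · have hval : G u i = 1 - u i := by simp only [hGdef]; rw [if_neg hcase]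
        rw [hval]
        push_neg at hcase
        refine ⟨⟨by linarith, by linarith⟩, ?_⟩
        rw [abs_of_nonpos (by linarith), abs_of_nonneg h1]
        linarith
    constructor
    · rw [hcube]; exact fun i => ⟨(hcoord i).1.1, (hcoord i).1.2⟩
    · simp only [hFdef, hψdef]
      refine ENNReal.ofReal_le_ofReal ?_
      have hnorm : ‖G u - x₀‖ ≤ ‖u‖ := by
        refine OppositeMass.norm_le_of_abs_coord_le (fun i => ?_)
        have hc := (hcoord i).2
        simpa using hc
      have := mul_le_mul_of_nonneg_left hnorm hL.le
      linarith
  have hchain1 : ∫⁻ u in Qset, ψ u ∂volume ≤ ∫⁻ y in cube, F y ∂volume := by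
    have hind : Measurable (cube.indicator F) := hFmeas.indicator hcube_meas
    calc ∫⁻ u in Qset, ψ u ∂volume
        ≤ ∫⁻ u in Qset, cube.indicator F (G u) ∂volume := by
          refine lintegral_mono_ae ?_
          filter_upwards [ae_restrict_mem hQmeas] with u hu
          rw [Set.indicator_of_mem (hGu u hu).1]
          exact (hGu u hu).2
      _ = ∫⁻ y, cube.indicator F y ∂(Measure.map G (volume.restrict Qset)) :=
          (lintegral_map hind hGmeas).symm
      _ ≤ ∫⁻ y, cube.indicator F y ∂volume := lintegral_mono' hmap le_rfl
      _ = ∫⁻ y in cube, F y ∂volume := lintegral_indicator hcube_meas F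
  -- symmetry
  have hsym : ∀ u v : EuclideanSpace ℝ (Fin d),
      (∀ i, v i = u i ∨ v i = - u i) → ψ v = ψ u := by
    intro u v hv
    have habs : ∀ i, |v i| = |u i| := by
      intro i
      rcases hv i with h' | h' <;> rw [h'] <;> simp
    have hnn : ‖v‖ = ‖u‖ :=
      le_antisymm (OppositeMass.norm_le_of_abs_coord_le (fun i => (habs i).le))
        (OppositeMass.norm_le_of_abs_coord_le (fun i => (habs i).ge))
    simp only [hψdef, hnn]
  have horth := OppositeMass.orthant_lintegral hd ψ hψmeas hsym
  have hOQ : ∫⁻ u, Set.indicator {v : EuclideanSpace ℝ (Fin d) | ∀ i, 0 ≤ v i} ψ u ∂volume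
      ≤ ∫⁻ u in Qset, ψ u ∂volume := by
    rw [← lintegral_indicator hQmeas]
    refine lintegral_mono (fun u => ?_)
    by_cases hu : u ∈ {v : EuclideanSpace ℝ (Fin d) | ∀ i, 0 ≤ v i}
    · rw [Set.indicator_of_mem hu]
      by_cases huQ : u ∈ Qset
      · rw [Set.indicator_of_mem huQ]
      · have hex : ∃ i, 1 < u i := by
          by_contra hcon
          push_neg at hcon
          exact huQ (fun i => ⟨hu i, hcon i⟩)
        obtain ⟨i, hi⟩ := hex
        have hnorm : 1 < ‖u‖ :=
          lt_of_lt_of_le hi (le_trans (le_abs_self _) (OppositeMass.abs_coord_le_norm u i))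
        have hneg : γ - L * ‖u‖ ≤ 0 := by nlinarith
        simp only [hψdef]
        rw [ENNReal.ofReal_of_nonpos hneg]
        exact zero_le
    · rw [Set.indicator_of_notMem hu]
      exact zero_le
  have hrad : ∫⁻ u, ψ u ∂volume =
      ENNReal.ofReal ((volume (Metric.ball (0 : EuclideanSpace ℝ (Fin d)) 1)).toReal *
        (γ ^ (d + 1) / ((d + 1) * L ^ d))) := by
    simp only [hψdef]
    exact OppositeMass.radial_lintegral hd γ L hγ hL
  -- lower bound on μ
  have hμlow : (ENNReal.ofReal c) • (volume.restrict cube) ≤ μ := by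
    rw [Measure.le_iff]
    intro s hs
    rw [hμ, withDensity_apply _ hs, Measure.smul_apply, smul_eq_mul, ← setLIntegral_const]
    refine lintegral_mono_ae ?_
    filter_upwards [ae_restrict_of_ae (ae_restrict_mem hcube_meas)] with y hy
    exact ENNReal.ofReal_le_ofReal (hp y hy)
  set X : ℝ≥0∞ := ∫⁻ y, ENNReal.ofReal (g y) ∂μ with hXdef
  have hXF : X = ∫⁻ y, F y ∂μ := lintegral_congr (fun y => hgF y)
  have hX1 : ENNReal.ofReal c * ∫⁻ y in cube, F y ∂volume ≤ X := by
    rw [hXF]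
    calc ENNReal.ofReal c * ∫⁻ y in cube, F y ∂volume
        = ∫⁻ y, F y ∂((ENNReal.ofReal c) • volume.restrict cube) := by
          rw [lintegral_smul_measure, smul_eq_mul]
      _ ≤ ∫⁻ y, F y ∂μ := lintegral_mono' hμlow le_rfl
  -- assemble
  have hfinal : ENNReal.ofReal
      (c * ((volume (Metric.ball (0 : EuclideanSpace ℝ (Fin d)) 1)).toReal *
        (γ ^ (d + 1) / ((d + 1) * L ^ d)))) ≤ 2 ^ d * X := by
    rw [ENNReal.ofReal_mul hc.le, ← hrad]
    calc ENNReal.ofReal c * ∫⁻ u, ψ u ∂volume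
        ≤ ENNReal.ofReal c * (2 ^ d *
            ∫⁻ u, Set.indicator {v : EuclideanSpace ℝ (Fin d) | ∀ i, 0 ≤ v i} ψ u ∂volume) :=
          mul_le_mul_right horth _
      _ ≤ ENNReal.ofReal c * (2 ^ d * ∫⁻ u in Qset, ψ u ∂volume) :=
          mul_le_mul_right (mul_le_mul_right hOQ _) _
      _ ≤ ENNReal.ofReal c * (2 ^ d * ∫⁻ y in cube, F y ∂volume) :=
          mul_le_mul_right (mul_le_mul_right hchain1 _) _
      _ = 2 ^ d * (ENNReal.ofReal c * ∫⁻ y in cube, F y ∂volume) := by ring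
      _ ≤ 2 ^ d * X := mul_le_mul_right hX1 _
  have hβ0 : 0 ≤ β := by rw [hβ]; exact ENNReal.toReal_nonneg
  set K : ℝ := c * γ ^ (d + 1) * β / ((d + 1) * (2 * L) ^ d) with hKdef
  have hK0 : 0 ≤ K := by
    rw [hKdef]
    apply div_nonneg
    · exact mul_nonneg (mul_nonneg hc.le (pow_nonneg hγ.le _)) hβ0
    · positivity
  have hKval : (2:ℝ) ^ d * K =
      c * ((volume (Metric.ball (0 : EuclideanSpace ℝ (Fin d)) 1)).toReal *
        (γ ^ (d + 1) / ((d + 1) * L ^ d))) := by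
    rw [hKdef, hβ]
    have hd1 : ((d:ℝ) + 1) ≠ 0 := by positivity
    have hLne : L ≠ 0 := ne_of_gt hL
    rw [mul_pow]
    field_simp
  have h2X : ENNReal.ofReal ((2:ℝ) ^ d * K) ≤ 2 ^ d * X := by rw [hKval]; exact hfinal
  have hofK : ENNReal.ofReal ((2:ℝ) ^ d * K) = 2 ^ d * ENNReal.ofReal K := by
    rw [ENNReal.ofReal_mul (by positivity), ENNReal.ofReal_pow (by norm_num : (0:ℝ) ≤ 2)]
    norm_num
  have hXK : ENNReal.ofReal K ≤ X := by
    rw [hofK] at h2X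
    have h2d0 : ((2:ℝ≥0∞) ^ d) ≠ 0 := pow_ne_zero d (by norm_num)
    have h2dtop : ((2:ℝ≥0∞) ^ d) ≠ ⊤ := ENNReal.pow_ne_top (by norm_num)
    exact (ENNReal.mul_le_mul_iff_right h2d0 h2dtop).mp h2X
  have hXtop : X ≠ ⊤ := by
    have hle : X ≤ ∫⁻ _, ENNReal.ofReal γ ∂μ := by
      rw [hXdef]
      exact lintegral_mono (fun y => ENNReal.ofReal_le_ofReal (hgleγ y))
    rw [lintegral_const, measure_univ, mul_one] at hle
    exact ne_top_of_le_ne_top ENNReal.ofReal_ne_top hle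
  have hgeq : ∫ y, g y ∂μ = X.toReal := by
    rw [hXdef]
    exact integral_eq_lintegral_of_nonneg_ae (Filter.Eventually.of_forall hgnonneg)
      hgcont.aestronglyMeasurable
  have hKg : K ≤ ∫ y, g y ∂μ := by
    rw [hgeq]
    have := ENNReal.toReal_mono hXtop hXK
    rwa [ENNReal.toReal_ofReal hK0] at this
  refine ⟨y₀, hy₀cube, ?_⟩
  rw [hfy' y₀]
  exact le_trans hKg hstep
end
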